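/- Let θ be a CPWL function and let φ₀ and Φ be twice continuously differentiable around x̄ in the composite optimization setting with v̄ ∈ Λ_com(x̄). If the KKT solution map S_KKT is Lipschitz-like around ((0,0),(x̄,v̄)), then S_KKT is robustly isolatedly calm at ((0,0),(x̄,v̄)). -/

import Mathlib

open Filter Topology Set RealInnerProductSpace

noncomputable section

abbrev Ev (k : ℕ) := EuclideanSpace ℝ (Fin k)

/-- The Bouligand–Severi tangent cone to a set `s` at `x`. -/
def tcone {E : Type*} [NormedAddCommGroup E] [NormedSpace ℝ E] (s : Set E) (x : E) : Set E :=
  {w | ∃ (z : ℕ → E) (c : ℕ → ℝ), (∀ k, z k ∈ s) ∧ (∀ k, 0 ≤ c k) ∧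
      Tendsto z atTop (𝓝 x) ∧ Tendsto (fun k => c k • (z k - x)) atTop (𝓝 w)}

/-- The data of a convex piecewise linear (CPWL) extended-real-valued function on `ℝ^m`:
`θ(z) = max_i (⟨a i, z⟩ - al i)` on the polyhedron `dom θ = {z | ⟨d i, z⟩ ≤ be i ∀ i}`,
and `θ(z) = +∞` outside of it. -/
structure CPWL (m : ℕ) where
  l : ℕ
  p : ℕ
  hl : 0 < l
  a : Fin l → Ev m
  al : Fin l → ℝ
  d : Fin p → Ev m
  be : Fin p → ℝ
  dom_nonempty : ∃ z : Ev m, ∀ i, ⟪d i, z⟫ ≤ be i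

namespace CPWL

variable {m : ℕ} (θ : CPWL m)

/-- The (polyhedral) domain of the CPWL function. -/
def dom : Set (Ev m) := {z | ∀ i, ⟪θ.d i, z⟫ ≤ θ.be i}

/-- The real value `max_i (⟨a i, z⟩ - al i)` of the CPWL function (meaningful on its domain). -/
def val (z : Ev m) : ℝ := ⨆ i : Fin θ.l, (⟪θ.a i, z⟫ - θ.al i)

/-- The CPWL function as an extended-real-valued function. -/
def eval (z : Ev m) : EReal :=
  @ite _ (z ∈ θ.dom) (Classical.propDecidable _) ((θ.val z : ℝ) : EReal) ⊤

/-- The subdifferential (of convex analysis) of the CPWL function. -/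
def subdiff (z : Ev m) : Set (Ev m) :=
  {v | z ∈ θ.dom ∧ ∀ z' ∈ θ.dom, ⟪v, z' - z⟫ ≤ θ.val z' - θ.val z}

/-- Active indices `K(z)` of the max-representation. -/
def Kact (z : Ev m) : Set (Fin θ.l) := {i | θ.val z = ⟪θ.a i, z⟫ - θ.al i}

/-- Active indices `I(z)` of the domain constraints. -/
def Iact (z : Ev m) : Set (Fin θ.p) := {i | ⟪θ.d i, z⟫ = θ.be i}

/-- The critical cone `𝒦(z̄,v̄) = {w ∈ T(z̄; dom θ) : ⟨v̄,w⟩ = θ′(z̄;w)}`. -/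
def crit (zb vb : Ev m) : Set (Ev m) :=
  {w | w ∈ tcone θ.dom zb ∧
    Tendsto (fun t : ℝ => (θ.val (zb + t • w) - θ.val zb) / t) (𝓝[>] (0 : ℝ))
      (𝓝 ⟪vb, w⟫)}

/-- The graph of the subdifferential mapping. -/
def gph : Set (Ev m × Ev m) := {zv | zv.2 ∈ θ.subdiff zv.1}

/-- The graphical derivative `(D∂θ)(z̄,v̄)(u)`. -/
def Dsub (zb vb u : Ev m) : Set (Ev m) := {w | (u, w) ∈ tcone θ.gph (zb, vb)}

/-- The regular coderivative `(D̂*∂θ)(z̄,v̄)(u)`. -/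
def Dhat (zb vb u : Ev m) : Set (Ev m) :=
  {w | ∀ h ∈ tcone θ.gph (zb, vb), ⟪w, h.1⟫ - ⟪u, h.2⟫ ≤ 0}

end CPWL

section VarSys

variable {n m : ℕ}

/-- The adjoint `∇Φ(x)*` of the Jacobian of `Φ` at `x`. -/
def adjD (Φ : Ev n → Ev m) (x : Ev n) : Ev m →L[ℝ] Ev n :=
  ContinuousLinearMap.adjoint (fderiv ℝ Φ x)

/-- `Ψ(x,v) = f(x) + ∇Φ(x)* v`. -/
def Psi (f : Ev n → Ev n) (Φ : Ev n → Ev m) (x : Ev n) (v : Ev m) : Ev n :=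
  f x + adjD Φ x v

/-- The partial Jacobian `∇ₓΨ(x̄,v̄)`. -/
def gradxPsi (f : Ev n → Ev n) (Φ : Ev n → Ev m) (xb : Ev n) (vb : Ev m) :
    Ev n →L[ℝ] Ev n :=
  fderiv ℝ (fun x => Psi f Φ x vb) xb

/-- The Lagrange multiplier set `Λ(x̄)` of the variational system. -/
def Lam (f : Ev n → Ev n) (Φ : Ev n → Ev m) (θ : CPWL m) (xb : Ev n) : Set (Ev m) :=
  {v | Psi f Φ xb v = 0 ∧ v ∈ θ.subdiff (Φ xb)}

/-- `v̄` is a critical multiplier for the variational system. -/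
def IsCritical (f : Ev n → Ev n) (Φ : Ev n → Ev m) (θ : CPWL m) (xb : Ev n) (vb : Ev m) :
    Prop :=
  ∃ ξ : Ev n, ξ ≠ 0 ∧ ∃ w ∈ θ.Dsub (Φ xb) vb (fderiv ℝ Φ xb ξ),
    gradxPsi f Φ xb vb ξ + adjD Φ xb w = 0

/-- The solution map of the canonically perturbed variational system. -/
def Smap (f : Ev n → Ev n) (Φ : Ev n → Ev m) (θ : CPWL m) (p₁ : Ev n) (p₂ : Ev m) :
    Set (Ev n × Ev m) :=
  {xv | Psi f Φ xv.1 xv.2 = p₁ ∧ xv.2 ∈ θ.subdiff (Φ xv.1 + p₂)}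

end VarSys

section General

variable {n m : ℕ}

/-- The subdifferential of a general extended-real-valued function. -/
def subdiffE (θ : Ev m → EReal) (z : Ev m) : Set (Ev m) :=
  {v | ∀ z', ((⟪v, z' - z⟫ : ℝ) : EReal) ≤ θ z' - θ z}

/-- The graph of the subdifferential of a general extended-real-valued function. -/
def gphE (θ : Ev m → EReal) : Set (Ev m × Ev m) := {zv | zv.2 ∈ subdiffE θ zv.1}

/-- The graphical derivative of the subdifferential, general case. -/
def DsubE (θ : Ev m → EReal) (zb vb u : Ev m) : Set (Ev m) :=
  {w | (u, w) ∈ tcone (gphE θ) (zb, vb)}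

/-- The Lagrange multiplier set, general case. -/
def LamE (f : Ev n → Ev n) (Φ : Ev n → Ev m) (θ : Ev m → EReal) (xb : Ev n) :
    Set (Ev m) :=
  {v | Psi f Φ xb v = 0 ∧ v ∈ subdiffE θ (Φ xb)}

/-- The solution map of the canonically perturbed variational system, general case. -/
def SmapE (f : Ev n → Ev n) (Φ : Ev n → Ev m) (θ : Ev m → EReal) (p₁ : Ev n)
    (p₂ : Ev m) : Set (Ev n × Ev m) :=
  {xv | Psi f Φ xv.1 xv.2 = p₁ ∧ xv.2 ∈ subdiffE θ (Φ xv.1 + p₂)}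

end General

section Composite

variable {n m : ℕ}

/-- The gradient `∇ₓL(·,v)` of the Lagrangian `L(x,v) = φ₀(x) + ⟨Φ(x),v⟩`. -/
def gradL (φ₀ : Ev n → ℝ) (Φ : Ev n → Ev m) (v : Ev m) (x : Ev n) : Ev n :=
  gradient (fun y => φ₀ y + ⟪Φ y, v⟫) x

/-- The Hessian `∇²ₓₓL(x̄,v)` as a linear operator. -/
def HessOp (φ₀ : Ev n → ℝ) (Φ : Ev n → Ev m) (v : Ev m) (xb : Ev n) : Ev n →L[ℝ] Ev n :=
  fderiv ℝ (gradL φ₀ Φ v) xb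

/-- The Lagrange multiplier set `Λ_com(x̄)` of the composite optimization problem. -/
def LamCom (φ₀ : Ev n → ℝ) (Φ : Ev n → Ev m) (θ : CPWL m) (xb : Ev n) : Set (Ev m) :=
  {v | gradient φ₀ xb + adjD Φ xb v = 0 ∧ v ∈ θ.subdiff (Φ xb)}

/-- Criticality of a multiplier in the composite optimization setting. -/
def IsCriticalCom (φ₀ : Ev n → ℝ) (Φ : Ev n → Ev m) (θ : CPWL m) (xb : Ev n) (v : Ev m) :
    Prop :=
  ∃ ξ : Ev n, ξ ≠ 0 ∧ ∃ w ∈ θ.Dsub (Φ xb) v (fderiv ℝ Φ xb ξ),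
    HessOp φ₀ Φ v xb ξ + adjD Φ xb w = 0

/-- The solution map of the canonically perturbed KKT system of composite optimization. -/
def SKKT (φ₀ : Ev n → ℝ) (Φ : Ev n → Ev m) (θ : CPWL m) (p₁ : Ev n) (p₂ : Ev m) :
    Set (Ev n × Ev m) :=
  {xv | gradient φ₀ xv.1 + adjD Φ xv.1 xv.2 = p₁ ∧ xv.2 ∈ θ.subdiff (Φ xv.1 + p₂)}

/-- `x̄` is a local minimizer of `φ₀ + θ∘Φ`. -/
def LocalMin (φ₀ : Ev n → ℝ) (Φ : Ev n → Ev m) (θ : CPWL m) (xb : Ev n) : Prop :=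
  ∃ U ∈ 𝓝 xb, ∀ x ∈ U,
    ((φ₀ xb : ℝ) : EReal) + θ.eval (Φ xb) ≤ ((φ₀ x : ℝ) : EReal) + θ.eval (Φ x)

end Composite

section Calmness

variable {n m : ℕ}

/-- Isolated calmness of a solution map at `((0,0), q0)`. -/
def IsolCalm (S : Ev n × Ev m → Set (Ev n × Ev m)) (q0 : Ev n × Ev m) : Prop :=
  ∃ c : ℝ, 0 ≤ c ∧ ∃ U ∈ 𝓝 (0 : Ev n × Ev m), ∃ V ∈ 𝓝 q0,
    ∀ p ∈ U, ∀ q ∈ S p ∩ V, ‖q - q0‖ ≤ c * (‖p.1‖ + ‖p.2‖)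

/-- Robust isolated calmness of a solution map at `((0,0), q0)`. -/
def RobustIsolCalm (S : Ev n × Ev m → Set (Ev n × Ev m)) (q0 : Ev n × Ev m) : Prop :=
  ∃ c : ℝ, 0 ≤ c ∧ ∃ U ∈ 𝓝 (0 : Ev n × Ev m), ∃ V ∈ 𝓝 q0,
    (∀ p ∈ U, ∀ q ∈ S p ∩ V, ‖q - q0‖ ≤ c * (‖p.1‖ + ‖p.2‖)) ∧
    (∀ p ∈ U, (S p ∩ V).Nonempty)

/-- The Lipschitz-like (Aubin) property of a solution map around `((0,0), q0)`. -/
def LipschitzLike (S : Ev n × Ev m → Set (Ev n × Ev m)) (q0 : Ev n × Ev m) : Prop :=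
  ∃ c : ℝ, 0 ≤ c ∧ ∃ U ∈ 𝓝 (0 : Ev n × Ev m), ∃ V ∈ 𝓝 q0,
    ∀ p ∈ U, ∀ p' ∈ U, ∀ q ∈ S p ∩ V, ∃ q' ∈ S p', ‖q - q'‖ ≤ c * ‖p - p'‖

end Calmness

section CPWLLemmas

namespace CPWL

variable {m : ℕ} (θ : CPWL m)

lemma nonemptyFin : Nonempty (Fin θ.l) := Fin.pos_iff_nonempty.mp θ.hl

lemma le_val (z : Ev m) (i : Fin θ.l) : ⟪θ.a i, z⟫ - θ.al i ≤ θ.val z := by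
  exact le_ciSup (f := fun j : Fin θ.l => ⟪θ.a j, z⟫ - θ.al j)
    (Set.Finite.bddAbove (Set.finite_range _)) i

lemma val_le (z : Ev m) {C : ℝ} (h : ∀ i, ⟪θ.a i, z⟫ - θ.al i ≤ C) : θ.val z ≤ C := by
  haveI := θ.nonemptyFin; exact ciSup_le h

lemma exists_val_eq (z : Ev m) : ∃ i, θ.val z = ⟪θ.a i, z⟫ - θ.al i := by
  haveI := θ.nonemptyFin
  obtain ⟨i, hi⟩ := Finite.exists_max (fun i : Fin θ.l => ⟪θ.a i, z⟫ - θ.al i)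
  exact ⟨i, le_antisymm (θ.val_le z hi) (θ.le_val z i)⟩

lemma val_affine (zb : Ev m) :
    ∃ r1 > 0, ∀ w : Ev m, ‖w‖ ≤ r1 →
      θ.val (zb + (2:ℝ) • w) + θ.val zb = 2 * θ.val (zb + w) := by
  classical
  haveI := θ.nonemptyFin
  obtain ⟨i0, hi0⟩ := θ.exists_val_eq zb
  set f : Fin θ.l → ℝ := fun i => ⟪θ.a i, zb⟫ - θ.al i with hf
  have hmax : ∀ i, f i ≤ f i0 := by
    intro i
    have := θ.le_val zb i
    rw [hi0] at this
    exact this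
  set C : ℝ := (Finset.univ.sup' Finset.univ_nonempty fun i : Fin θ.l => ‖θ.a i‖) + 1 with hCdef
  have hC : ∀ i, ‖θ.a i‖ ≤ C := by
    intro i
    have h : ‖θ.a i‖ ≤ Finset.univ.sup' Finset.univ_nonempty fun i : Fin θ.l => ‖θ.a i‖ :=
      Finset.le_sup' (fun i : Fin θ.l => ‖θ.a i‖) (Finset.mem_univ i)
    linarith
  have hCpos : 0 < C := by
    have h1 : (0:ℝ) ≤ ‖θ.a i0‖ := norm_nonneg _
    have h2 : ‖θ.a i0‖ ≤ Finset.univ.sup' Finset.univ_nonempty fun i : Fin θ.l => ‖θ.a i‖ :=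
      Finset.le_sup' (fun i : Fin θ.l => ‖θ.a i‖) (Finset.mem_univ i0)
    rw [hCdef]; linarith
  set K : Finset (Fin θ.l) := Finset.univ.filter (fun i => f i0 ≤ f i) with hKdef
  have hKmem : i0 ∈ K := by simp [hKdef]
  have hKeq : ∀ i ∈ K, f i = f i0 := by
    intro i hi
    rw [hKdef] at hi
    simp only [Finset.mem_filter] at hi
    exact le_antisymm (hmax i) hi.2
  set ε : ℝ := Finset.univ.inf' Finset.univ_nonempty
      (fun i => if f i < f i0 then f i0 - f i else 1) with hεdef
  have hεpos : 0 < ε := by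
    rw [hεdef, Finset.lt_inf'_iff]
    intro i _
    split
    · linarith [show f i < f i0 from by assumption]
    · exact one_pos
  have hgap : ∀ i, i ∉ K → f i ≤ f i0 - ε := by
    intro i hi
    have hlt : f i < f i0 := by
      by_contra h
      exact hi (by simp [hKdef, not_lt.mp h])
    have : ε ≤ f i0 - f i := by
      have := Finset.inf'_le (b := i)
        (fun i => if f i < f i0 then f i0 - f i else 1) (Finset.mem_univ i)
      rw [if_pos hlt] at this
      exact le_trans (le_of_eq hεdef) this
    linarith
  refine ⟨ε / (4 * C), by positivity, ?_⟩
  have hKne : K.Nonempty := ⟨i0, hKmem⟩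
  set M : Ev m → ℝ := fun w => K.sup' hKne (fun i => ⟪θ.a i, w⟫) with hMdef
  have key : ∀ w : Ev m, ‖w‖ ≤ 2 * (ε / (4 * C)) → θ.val (zb + w) = f i0 + M w := by
    intro w hw
    have hple : ∀ i, |⟪θ.a i, w⟫| ≤ ε / 2 := by
      intro i
      have h1 : |⟪θ.a i, w⟫| ≤ ‖θ.a i‖ * ‖w‖ := abs_real_inner_le_norm _ _
      have h2 : ‖θ.a i‖ * ‖w‖ ≤ C * (2 * (ε / (4 * C))) := by
        apply mul_le_mul (hC i) hw (norm_nonneg _) (le_of_lt hCpos)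
      have h3 : C * (2 * (ε / (4 * C))) = ε / 2 := by field_simp; ring
      linarith
    apply le_antisymm
    · apply θ.val_le
      intro i
      have hrw : ⟪θ.a i, zb + w⟫ - θ.al i = f i + ⟪θ.a i, w⟫ := by
        rw [inner_add_right, hf]; ring
      rw [hrw]
      by_cases hiK : i ∈ K
      · have h5 : ⟪θ.a i, w⟫ ≤ K.sup' hKne (fun i => ⟪θ.a i, w⟫) :=
          Finset.le_sup' (fun i => ⟪θ.a i, w⟫) hiK
        have h6 : M w = K.sup' hKne (fun i => ⟪θ.a i, w⟫) := rfl
        rw [hKeq i hiK, h6]; linarith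
      · have h1 := hgap i hiK
        have h2 : -(ε/2) ≤ ⟪θ.a i0, w⟫ := neg_le_of_abs_le (hple i0)
        have h3 : ⟪θ.a i0, w⟫ ≤ K.sup' hKne (fun i => ⟪θ.a i, w⟫) :=
          Finset.le_sup' (fun i => ⟪θ.a i, w⟫) hKmem
        have h6 : M w = K.sup' hKne (fun i => ⟪θ.a i, w⟫) := rfl
        have h4 : ⟪θ.a i, w⟫ ≤ ε / 2 := le_of_abs_le (hple i)
        rw [h6]; linarith
    · obtain ⟨j, hjK, hjeq⟩ := Finset.exists_mem_eq_sup' hKne (fun i => ⟪θ.a i, w⟫)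
      have := θ.le_val (zb + w) j
      have hrw : ⟪θ.a j, zb + w⟫ - θ.al j = f j + ⟪θ.a j, w⟫ := by
        rw [inner_add_right, hf]; ring
      rw [hrw] at this
      rw [hKeq j hjK] at this
      have h6 : M w = K.sup' hKne (fun i => ⟪θ.a i, w⟫) := rfl
      rw [h6, hjeq]
      exact this
  intro w hw
  have hnn : (0:ℝ) ≤ ε / (4 * C) := by positivity
  have h1 : θ.val (zb + w) = f i0 + M w := key w (by linarith)
  have h2 : θ.val (zb + (2:ℝ) • w) = f i0 + M ((2:ℝ) • w) := by
    apply key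
    rw [norm_smul]
    simp only [Real.norm_ofNat]
    linarith
  have h3 : M ((2:ℝ) • w) = 2 * M w := by
    have e1 : M ((2:ℝ) • w) = K.sup' hKne (fun i => ⟪θ.a i, (2:ℝ) • w⟫) := rfl
    have e2 : M w = K.sup' hKne (fun i => ⟪θ.a i, w⟫) := rfl
    rw [e1, e2]
    apply le_antisymm
    · apply Finset.sup'_le
      intro i hi
      rw [real_inner_smul_right]
      have h5 : ⟪θ.a i, w⟫ ≤ K.sup' hKne (fun i => ⟪θ.a i, w⟫) :=
        Finset.le_sup' (fun i => ⟪θ.a i, w⟫) hi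
      linarith
    · obtain ⟨j, hjK, hjeq⟩ := Finset.exists_mem_eq_sup' hKne (fun i => ⟪θ.a i, w⟫)
      have h4 : ⟪θ.a j, (2:ℝ) • w⟫ ≤ K.sup' hKne (fun i => ⟪θ.a i, (2:ℝ) • w⟫) :=
        Finset.le_sup' (fun i => ⟪θ.a i, (2:ℝ) • w⟫) hjK
      rw [real_inner_smul_right] at h4
      rw [hjeq]
      linarith
  have h4 : θ.val zb = f i0 := hi0
  linarith

end CPWL

end CPWLLemmas
section CPWLLemmas2

namespace CPWL

variable {m : ℕ} (θ : CPWL m)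

lemma dom_two (zb : Ev m) (hzb : zb ∈ θ.dom) :
    ∃ r2 > 0, ∀ d : Ev m, ‖d‖ ≤ r2 → zb + d ∈ θ.dom → zb + (2:ℝ) • d ∈ θ.dom := by
  classical
  rcases Nat.eq_zero_or_pos θ.p with hp | hp
  · refine ⟨1, one_pos, fun d _ _ => ?_⟩
    intro j
    exact absurd j.isLt (by omega)
  · haveI : Nonempty (Fin θ.p) := ⟨⟨0, hp⟩⟩
    set T : Fin θ.p → ℝ := fun j =>
      if ⟪θ.d j, zb⟫ < θ.be j then (θ.be j - ⟪θ.d j, zb⟫) / (2 * ‖θ.d j‖ + 1) else 1 with hT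
    refine ⟨Finset.univ.inf' Finset.univ_nonempty T, ?_, ?_⟩
    · show (0:ℝ) < Finset.univ.inf' Finset.univ_nonempty T
      rw [Finset.lt_inf'_iff]
      intro j _
      rw [hT]
      dsimp only
      split
      · have h : ⟪θ.d j, zb⟫ < θ.be j := by assumption
        have : (0:ℝ) < 2 * ‖θ.d j‖ + 1 := by positivity
        apply div_pos (by linarith) this
      · exact one_pos
    · intro d hd hd1
      intro j
      have hTj : Finset.univ.inf' Finset.univ_nonempty T ≤ T j :=
        Finset.inf'_le T (Finset.mem_univ j)
      have h1 : ⟪θ.d j, zb + d⟫ ≤ θ.be j := hd1 j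
      have h0 : ⟪θ.d j, zb⟫ ≤ θ.be j := hzb j
      rw [inner_add_right] at h1
      show ⟪θ.d j, zb + (2:ℝ) • d⟫ ≤ θ.be j
      rw [inner_add_right, real_inner_smul_right]
      by_cases hlt : ⟪θ.d j, zb⟫ < θ.be j
      · have hTval : T j = (θ.be j - ⟪θ.d j, zb⟫) / (2 * ‖θ.d j‖ + 1) := if_pos hlt
        have hdn : (0:ℝ) < 2 * ‖θ.d j‖ + 1 := by positivity
        have hs : (0:ℝ) ≤ θ.be j - ⟪θ.d j, zb⟫ := by linarith
        have hineq : 2 * ⟪θ.d j, d⟫ ≤ 2 * (‖θ.d j‖ * ‖d‖) := by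
          have := real_inner_le_norm (θ.d j) d
          linarith
        have hdT : ‖d‖ ≤ T j := le_trans hd hTj
        have hnum : 2 * ‖θ.d j‖ * T j ≤ θ.be j - ⟪θ.d j, zb⟫ := by
          rw [hTval]
          rw [div_eq_mul_inv]
          have h2 : 2 * ‖θ.d j‖ * ((θ.be j - ⟪θ.d j, zb⟫) * (2 * ‖θ.d j‖ + 1)⁻¹)
              = (θ.be j - ⟪θ.d j, zb⟫) * (2 * ‖θ.d j‖ * (2 * ‖θ.d j‖ + 1)⁻¹) := by ring
          rw [h2]
          have h3 : 2 * ‖θ.d j‖ * (2 * ‖θ.d j‖ + 1)⁻¹ ≤ 1 := by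
            rw [mul_inv_le_iff₀ hdn]; linarith
          nlinarith
        have hTnn : 0 ≤ T j := le_trans (norm_nonneg d) hdT
        have : 2 * (‖θ.d j‖ * ‖d‖) ≤ 2 * ‖θ.d j‖ * T j := by
          have := norm_nonneg (θ.d j)
          nlinarith
        linarith
      · have heq : ⟪θ.d j, zb⟫ = θ.be j := le_antisymm h0 (not_lt.mp hlt)
        have : ⟪θ.d j, d⟫ ≤ 0 := by linarith
        linarith

lemma swap_key (zb vb : Ev m) (hvb : vb ∈ θ.subdiff zb) :
    ∃ r0 > 0, ∀ z1 v1, v1 ∈ θ.subdiff z1 → ‖z1 - zb‖ ≤ r0 →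
      v1 ∈ θ.subdiff zb ∧
      ∀ zp vp, vp ∈ θ.subdiff zp →
        ⟪vp - v1, z1 - zb⟫ - ⟪v1 - vb, zp - zb⟫ ≤ 2 * ⟪vp - v1, zp - zb⟫ := by
  obtain ⟨r1, hr1, haff⟩ := θ.val_affine zb
  obtain ⟨r2, hr2, hdom2⟩ := θ.dom_two zb hvb.1
  refine ⟨min r1 r2, lt_min hr1 hr2, ?_⟩
  intro z1 v1 hv1 hdist
  have hz1 : z1 = zb + (z1 - zb) := by abel
  set d := z1 - zb with hd
  have hz1dom : z1 ∈ θ.dom := hv1.1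
  have h2dom : zb + (2:ℝ) • d ∈ θ.dom := by
    apply hdom2 d (le_trans hdist (min_le_right _ _))
    rw [← hz1]; exact hz1dom
  have haffd := haff d (le_trans hdist (min_le_left _ _))
  rw [← hz1] at haffd
  -- haffd : θ.val (zb + 2•d) + θ.val zb = 2 * θ.val z1
  have hv1d_le : ⟪v1, d⟫ ≤ θ.val z1 - θ.val zb := by
    have h := hv1.2 (zb + (2:ℝ) • d) h2dom
    have harg : zb + (2:ℝ) • d - z1 = d := by
      rw [hd]; module
    rw [harg] at h
    linarith
  have hv1d_ge : θ.val z1 - θ.val zb ≤ ⟪v1, d⟫ := by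
    have h := hv1.2 zb hvb.1
    have harg : zb - z1 = -d := by rw [hd]; abel
    rw [harg, inner_neg_right] at h
    linarith
  have hv1d : ⟪v1, d⟫ = θ.val z1 - θ.val zb := le_antisymm hv1d_le hv1d_ge
  have hC2 : v1 ∈ θ.subdiff zb := by
    refine ⟨hvb.1, fun z' hz' => ?_⟩
    have h := hv1.2 z' hz'
    have hsplit : ⟪v1, z' - zb⟫ = ⟪v1, z' - z1⟫ + ⟪v1, d⟫ := by
      rw [← inner_add_right]
      congr 1
      rw [hd]; abel
    rw [hsplit, hv1d]; linarith
  refine ⟨hC2, fun zp vp hvp => ?_⟩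
  have hzp : zp ∈ θ.dom := hvp.1
  have h3a := hvp.2 z1 hz1dom
  have h3b := hC2.2 zp hzp
  have h4a := hvb.2 zp hzp
  have h4b := hvp.2 zb hvb.1
  have e1 : ⟪vp, z1 - zp⟫ = ⟪vp, d⟫ - ⟪vp, zp - zb⟫ := by
    rw [← inner_sub_right]
    congr 1
    rw [hd]; abel
  have e2 : ⟪vp, zb - zp⟫ = -⟪vp, zp - zb⟫ := by
    rw [show zb - zp = -(zp - zb) by abel, inner_neg_right]
  rw [e1] at h3a
  rw [e2] at h4b
  have g1 : ⟪vp - v1, d⟫ = ⟪vp, d⟫ - ⟪v1, d⟫ := by rw [inner_sub_left]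
  have g2 : ⟪v1 - vb, zp - zb⟫ = ⟪v1, zp - zb⟫ - ⟪vb, zp - zb⟫ := by rw [inner_sub_left]
  have g3 : ⟪vp - v1, zp - zb⟫ = ⟪vp, zp - zb⟫ - ⟪v1, zp - zb⟫ := by rw [inner_sub_left]
  rw [g1, g2, g3]
  linarith

end CPWL

end CPWLLemmas2
section AnalysisLemmas

lemma strict_eps {E F : Type*} [NormedAddCommGroup E] [NormedSpace ℝ E]
    [NormedAddCommGroup F] [NormedSpace ℝ F] {f : E → F} {f' : E →L[ℝ] F} {x : E}
    (h : HasStrictFDerivAt f f' x) {ε : ℝ} (hε : 0 < ε) :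
    ∃ δ > 0, ∀ a b : E, dist a x < δ → dist b x < δ →
      ‖f a - f b - f' (a - b)‖ ≤ ε * ‖a - b‖ := by
  have h2 := (h.isLittleO).def hε
  rw [Metric.eventually_nhds_iff] at h2
  obtain ⟨δ, hδ, hball⟩ := h2
  refine ⟨δ, hδ, fun a b ha hb => ?_⟩
  have hd : dist ((a, b) : E × E) (x, x) < δ := by
    rw [Prod.dist_eq]; exact max_lt ha hb
  simpa using hball hd

section Main

variable {n m : ℕ} (θ : CPWL m) (φ₀ : Ev n → ℝ) (Φ : Ev n → Ev m) (xb : Ev n) (vb : Ev m)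

theorem skkt_aux (hphi : ContDiffAt ℝ 2 φ₀ xb) (hPhi : ContDiffAt ℝ 2 Φ xb) :
    ∃ E : (Ev n × Ev m) →L[ℝ] Ev n,
      HasStrictFDerivAt (fun q : Ev n × Ev m => gradient φ₀ q.1 + adjD Φ q.1 q.2) E (xb, vb) ∧
      (∀ w : Ev m, E (0, w) = adjD Φ xb w) ∧
      (∀ h h' : Ev n, ⟪E (h, 0), h'⟫ = ⟪E (h', 0), h⟫) := by
  classical
  set g : Ev n × Ev m → Ev n := fun q => gradient φ₀ q.1 + adjD Φ q.1 q.2 with hgdef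
  set q0 : Ev n × Ev m := (xb, vb) with hq0
  -- smoothness of the gradient part
  have hgrad1 : ContDiffAt ℝ 1 (fun x => gradient φ₀ x) xb := by
    have h1 : ContDiffAt ℝ 1 (fderiv ℝ φ₀) xb := hphi.fderiv_right (by norm_num)
    have h2 : (fun x => gradient φ₀ x)
        = fun x => (InnerProductSpace.toDual ℝ (Ev n)).symm.toContinuousLinearEquiv.toContinuousLinearMap
            (fderiv ℝ φ₀ x) := rfl
    rw [h2]
    exact ((InnerProductSpace.toDual ℝ (Ev n)).symm.toContinuousLinearEquiv.toContinuousLinearMap).contDiff.comp_contDiffAt xb h1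
  have hadjlin : IsBoundedLinearMap ℝ
      (fun T : Ev n →L[ℝ] Ev m => (ContinuousLinearMap.adjoint T : Ev m →L[ℝ] Ev n)) := by
    refine ⟨⟨fun x y => map_add _ x y, fun c x => ?_⟩, 1, one_pos, fun x => ?_⟩
    · have h := LinearIsometryEquiv.map_smulₛₗ (ContinuousLinearMap.adjoint
        (E := Ev n) (F := Ev m) (𝕜 := ℝ)) c x
      simpa [starRingEnd_apply] using h
    · rw [one_mul, LinearIsometryEquiv.norm_map]
  have hadj : ContDiffAt ℝ 1 (fun x => adjD Φ x) xb := by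
    have h1 : ContDiffAt ℝ 1 (fderiv ℝ Φ) xb := hPhi.fderiv_right (by norm_num)
    exact hadjlin.contDiff.comp_contDiffAt xb h1
  have hg1 : ContDiffAt ℝ 1 g q0 := by
    apply ContDiffAt.add
    · exact hgrad1.comp (f := Prod.fst) q0 contDiffAt_fst
    · exact ContDiffAt.clm_apply (hadj.comp (f := Prod.fst) q0 contDiffAt_fst) contDiffAt_snd
  refine ⟨fderiv ℝ g q0, hg1.hasStrictFDerivAt one_ne_zero, ?_, ?_⟩
  · -- E (0, w) = adjD Φ xb w
    have hmap : HasFDerivAt (fun v : Ev m => ((xb, v) : Ev n × Ev m))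
        ((0 : Ev m →L[ℝ] Ev n).prod (ContinuousLinearMap.id ℝ (Ev m))) vb :=
      HasFDerivAt.prodMk (hasFDerivAt_const xb vb) (hasFDerivAt_id vb)
    have h2 : HasFDerivAt (fun v : Ev m => g (xb, v))
        ((fderiv ℝ g q0).comp ((0 : Ev m →L[ℝ] Ev n).prod (ContinuousLinearMap.id ℝ (Ev m)))) vb :=
      ((hg1.hasStrictFDerivAt one_ne_zero).hasFDerivAt).comp vb hmap
    have h3 : HasFDerivAt (fun v : Ev m => g (xb, v)) (adjD Φ xb) vb := by
      have he : (fun v : Ev m => g (xb, v)) = fun v => gradient φ₀ xb + adjD Φ xb v := rfl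
      rw [he]
      exact (adjD Φ xb).hasFDerivAt.const_add (gradient φ₀ xb)
    have h4 := h2.unique h3
    intro w
    have h5 := congrArg (fun T : Ev m →L[ℝ] Ev n => T w) h4
    simpa using h5
  · -- symmetry
    set G : Ev n → ℝ := fun y => φ₀ y + ⟪Φ y, vb⟫ with hGdef
    have hG : ContDiffAt ℝ 2 G xb := hphi.add (hPhi.inner ℝ contDiffAt_const)
    have hev : (fun x => g (x, vb)) =ᶠ[𝓝 xb] gradient G := by
      have h1 : ∀ᶠ y in 𝓝 xb, ContDiffAt ℝ 2 φ₀ y := hphi.eventually (by simp)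
      have h2 : ∀ᶠ y in 𝓝 xb, ContDiffAt ℝ 2 Φ y := hPhi.eventually (by simp)
      filter_upwards [h1, h2] with y hy1 hy2
      have hφd : DifferentiableAt ℝ φ₀ y := hy1.differentiableAt (by norm_num)
      have hΦd : DifferentiableAt ℝ Φ y := hy2.differentiableAt (by norm_num)
      have hg1' : HasGradientAt φ₀ (gradient φ₀ y) y := hφd.hasGradientAt
      have hinner : HasGradientAt (fun z => ⟪Φ z, vb⟫) (adjD Φ y vb) y := by
        rw [hasGradientAt_iff_hasFDerivAt]
        have hcomp : HasFDerivAt (fun z => ⟪vb, Φ z⟫)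
            ((innerSL ℝ vb).comp (fderiv ℝ Φ y)) y :=
          ((innerSL ℝ vb).hasFDerivAt).comp y hΦd.hasFDerivAt
        have heqf : (fun z => ⟪Φ z, vb⟫) = (fun z => ⟪vb, Φ z⟫) := by
          funext z; exact real_inner_comm _ _
        rw [heqf]
        refine hcomp.congr_fderiv ?_
        symm
        ext w
        simp only [InnerProductSpace.toDual_apply_apply, ContinuousLinearMap.coe_comp',
          Function.comp_apply, innerSL_apply_apply]
        rw [adjD]
        exact ContinuousLinearMap.adjoint_inner_left _ _ _
      have hsum : HasFDerivAt G
          ((InnerProductSpace.toDual ℝ (Ev n)) (gradient φ₀ y + adjD Φ y vb)) y := by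
        have := (hg1'.hasFDerivAt).add (hinner.hasFDerivAt)
        rwa [← map_add] at this
      have : HasGradientAt G (gradient φ₀ y + adjD Φ y vb) y := by
        rw [hasGradientAt_iff_hasFDerivAt]; exact hsum
      show g (y, vb) = gradient G y
      rw [this.gradient]
    have hfeq : fderiv ℝ (fun x => g (x, vb)) xb = fderiv ℝ (gradient G) xb :=
      hev.fderiv_eq
    have hEh : ∀ h : Ev n, fderiv ℝ g q0 (h, 0) = fderiv ℝ (fun x => g (x, vb)) xb h := by
      intro h
      have hmap : HasFDerivAt (fun x : Ev n => ((x, vb) : Ev n × Ev m))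
          ((ContinuousLinearMap.id ℝ (Ev n)).prod 0) xb :=
        HasFDerivAt.prodMk (hasFDerivAt_id xb) (hasFDerivAt_const vb xb)
      have h2 : HasFDerivAt (fun x : Ev n => g (x, vb))
          ((fderiv ℝ g q0).comp ((ContinuousLinearMap.id ℝ (Ev n)).prod 0)) xb :=
        ((hg1.hasStrictFDerivAt one_ne_zero).hasFDerivAt).comp (g := g) xb hmap
      rw [h2.fderiv]
      simp
    have hGfd : ContDiffAt ℝ 1 (fderiv ℝ G) xb := hG.fderiv_right (by norm_num)
    set D2 : Ev n →L[ℝ] (Ev n →L[ℝ] ℝ) := fderiv ℝ (fderiv ℝ G) xb with hD2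
    have hsymG : ∀ v w, D2 v w = D2 w v := hG.isSymmSndFDerivAt (by norm_num)
    set L : (Ev n →L[ℝ] ℝ) →L[ℝ] Ev n :=
      (InnerProductSpace.toDual ℝ (Ev n)).symm.toContinuousLinearEquiv.toContinuousLinearMap with hL
    have hgradG : HasFDerivAt (gradient G) (L.comp D2) xb := by
      have h1 : HasFDerivAt (fderiv ℝ G) D2 xb := (hGfd.differentiableAt one_ne_zero).hasFDerivAt
      have h2 := (L.hasFDerivAt).comp xb h1
      exact h2
    intro h h'
    rw [hEh h, hEh h', hfeq, hgradG.fderiv]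
    show ⟪L (D2 h), h'⟫ = ⟪L (D2 h'), h⟫
    have hLa : ∀ (φ : Ev n →L[ℝ] ℝ) (w : Ev n), ⟪L φ, w⟫ = φ w := by
      intro φ w
      rw [hL]
      simp only [LinearIsometryEquiv.coe_toContinuousLinearEquiv,
        ContinuousLinearEquiv.coe_coe]
      exact InnerProductSpace.toDual_symm_apply
    rw [hLa, hLa]
    exact hsymG h h'

end Main

end AnalysisLemmas
section CoreTheorem

variable {n m : ℕ}

set_option maxHeartbeats 2000000 in
theorem skkt_isolated (θ : CPWL m) (φ₀ : Ev n → ℝ) (Φ : Ev n → Ev m)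
    (xb : Ev n) (vb : Ev m)
    (hphi : ContDiffAt ℝ 2 φ₀ xb) (hPhi : ContDiffAt ℝ 2 Φ xb)
    (hvb : vb ∈ LamCom φ₀ Φ θ xb)
    (hll : LipschitzLike (fun p => SKKT φ₀ Φ θ p.1 p.2) (xb, vb)) :
    ∃ ρ > 0, ∀ q1 ∈ SKKT φ₀ Φ θ 0 0,
      ‖q1 - ((xb, vb) : Ev n × Ev m)‖ < ρ → q1 = (xb, vb) := by
  classical
  obtain ⟨c, hc, U, hU, V, hV, hA⟩ := hll
  obtain ⟨δU, hδU, hUb⟩ := Metric.mem_nhds_iff.mp hU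
  obtain ⟨δV, hδV, hVb⟩ := Metric.mem_nhds_iff.mp hV
  obtain ⟨E, hgE, hE0, hsym⟩ := skkt_aux φ₀ Φ xb vb hphi hPhi
  set g : Ev n × Ev m → Ev n := fun q => gradient φ₀ q.1 + adjD Φ q.1 q.2 with hgdef
  set q0 : Ev n × Ev m := (xb, vb) with hq0def
  set B : Ev n →L[ℝ] Ev m := fderiv ℝ Φ xb with hBdef
  have hBs : HasStrictFDerivAt Φ B xb := hPhi.hasStrictFDerivAt (by norm_num)
  clear_value B
  set ε : ℝ := 1 / (16 * (c + 1)) with hεdef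
  have hεpos : 0 < ε := by rw [hεdef]; positivity
  have hε1 : ε ≤ 1 := by
    rw [hεdef, div_le_one (by positivity)]; linarith
  clear_value ε
  obtain ⟨δ₁, hδ₁, hg_eps⟩ := strict_eps hgE hεpos
  obtain ⟨δ₂, hδ₂, hΦ_eps⟩ := strict_eps hBs hεpos
  obtain ⟨r0, hr0, hswap⟩ := θ.swap_key (Φ xb) vb hvb.2
  set CB : ℝ := ‖B‖ + 1 with hCB
  have hCBpos : 0 < CB := by rw [hCB]; positivity
  clear_value CB
  set CE : ℝ := ‖E‖ + 1 with hCE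
  have hCEpos : 0 < CE := by rw [hCE]; positivity
  clear_value CE
  have hCBc1 : (0:ℝ) < CB * c + 1 := by linarith [mul_nonneg hCBpos.le hc]
  set μ : ℝ := 1 / (8 * (c + 1) * (CB * c + 1)) with hμdef
  have hμpos : 0 < μ := by
    rw [hμdef]
    apply div_pos one_pos
    apply mul_pos (by linarith) hCBc1
  clear_value μ
  have hcm2 : (0:ℝ) < c * μ + 2 := by linarith [mul_nonneg hc hμpos.le]
  have hcm1 : (1:ℝ) ≤ c * μ + 2 := by linarith [mul_nonneg hc hμpos.le]
  set ρ : ℝ := min (min (δV / 2) (min (δ₁ / (c * μ + 2)) (δ₂ / (c * μ + 2))))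
      (min (δU / (CE + μ + 1)) (r0 / CB)) with hρdef
  have hρpos : 0 < ρ := by
    rw [hρdef]
    apply lt_min
    · apply lt_min (by positivity)
      apply lt_min (by positivity) (by positivity)
    · apply lt_min (by positivity) (by positivity)
  clear_value ρ
  refine ⟨ρ, hρpos, ?_⟩
  rintro ⟨x1, v1⟩ hq1 hlt
  by_contra hne
  have hρA : ρ ≤ δV / 2 := by
    rw [hρdef]; exact le_trans (min_le_left _ _) (min_le_left _ _)
  have hρB : ρ ≤ δ₁ / (c * μ + 2) := by
    rw [hρdef]
    exact le_trans (min_le_left _ _) (le_trans (min_le_right _ _) (min_le_left _ _))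
  have hρC : ρ ≤ δ₂ / (c * μ + 2) := by
    rw [hρdef]
    exact le_trans (min_le_left _ _) (le_trans (min_le_right _ _) (min_le_right _ _))
  have hρD : ρ ≤ δU / (CE + μ + 1) := by
    rw [hρdef]; exact le_trans (min_le_right _ _) (min_le_left _ _)
  have hρE : ρ ≤ r0 / CB := by
    rw [hρdef]; exact le_trans (min_le_right _ _) (min_le_right _ _)
  set u : Ev m := v1 - vb with hu
  set ξ : Ev n := x1 - xb with hξ
  set r : ℝ := ‖((x1, v1) : Ev n × Ev m) - q0‖ with hrdef
  have hrpos : 0 < r := by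
    rw [hrdef, norm_pos_iff]
    exact sub_ne_zero.mpr hne
  have hq1q0 : ((x1, v1) : Ev n × Ev m) - q0 = (ξ, u) := rfl
  have hrmax : r = max ‖ξ‖ ‖u‖ := by rw [hrdef, hq1q0, Prod.norm_def]
  have hξr : ‖ξ‖ ≤ r := by rw [hrmax]; exact le_max_left _ _
  have hur : ‖u‖ ≤ r := by rw [hrmax]; exact le_max_right _ _
  have hrρ : r < ρ := hlt
  -- numeric consequences of ρ choice
  have hrδ₁ : c * (μ * r) + r < δ₁ := by
    have h1 : r * (c * μ + 2) < δ₁ := by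
      have := lt_of_lt_of_le hrρ hρB
      rw [lt_div_iff₀ hcm2] at this
      exact this
    have e : r * (c * μ + 2) = c * (μ * r) + 2 * r := by ring
    linarith
  have hrδ₂ : c * (μ * r) + r < δ₂ := by
    have h1 : r * (c * μ + 2) < δ₂ := by
      have := lt_of_lt_of_le hrρ hρC
      rw [lt_div_iff₀ hcm2] at this
      exact this
    have e : r * (c * μ + 2) = c * (μ * r) + 2 * r := by ring
    linarith
  have hrδV : r < δV := by
    have := lt_of_lt_of_le hrρ hρA
    linarith
  have hrδU : CE * r + μ * r < δU := by
    have h1 : r * (CE + μ + 1) < δU := by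
      have h2 : (0:ℝ) < CE + μ + 1 := by linarith
      have := lt_of_lt_of_le hrρ hρD
      rw [lt_div_iff₀ h2] at this
      exact this
    have e : r * (CE + μ + 1) = CE * r + μ * r + r := by ring
    linarith
  have hrr0 : CB * r ≤ r0 := by
    have h1 : r * CB < r0 := by
      have := lt_of_lt_of_le hrρ hρE
      rw [lt_div_iff₀ hCBpos] at this
      exact this
    have e : r * CB = CB * r := by ring
    linarith
  -- facts about q1
  have hgq1 : g (x1, v1) = 0 := hq1.1
  have hgq0 : g q0 = 0 := hvb.1
  have hv1sub : v1 ∈ θ.subdiff (Φ x1) := by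
    have h := hq1.2
    rwa [add_zero] at h
  -- E applied to the difference of the two solutions is small
  have hdist_r : dist ((x1, v1) : Ev n × Ev m) q0 = r := dist_eq_norm _ _
  have hnorm_ξu : ‖((ξ, u) : Ev n × Ev m)‖ = r := by rw [← hq1q0]
  have hq1δ₁ : dist ((x1, v1) : Ev n × Ev m) q0 < δ₁ := by
    rw [hdist_r]
    have : c * (μ * r) ≥ 0 := by positivity
    linarith
  have hq0δ₁ : dist q0 q0 < δ₁ := by rw [dist_self]; exact hδ₁
  have hEkkt : ‖E ((ξ, u) : Ev n × Ev m)‖ ≤ ε * r := by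
    have h := hg_eps (x1, v1) q0 hq1δ₁ hq0δ₁
    rw [hgq1, hgq0, hq1q0] at h
    simp only [sub_zero, zero_sub, norm_neg] at h
    rw [hnorm_ξu] at h
    exact h
  -- strict bound for Φ between x1 and xb
  have hx1δ₂ : dist x1 xb < δ₂ := by
    have h0 : dist x1 xb = ‖ξ‖ := by rw [dist_eq_norm, hξ]
    rw [h0]
    have : c * (μ * r) ≥ 0 := by positivity
    linarith
  have hxbδ₂ : dist xb xb < δ₂ := by rw [dist_self]; exact hδ₂
  set RΦ1 : Ev m := Φ x1 - Φ xb - B ξ with hRΦ1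
  have hRΦ1b : ‖RΦ1‖ ≤ ε * r := by
    have h := hΦ_eps x1 xb hx1δ₂ hxbδ₂
    calc ‖RΦ1‖ = ‖Φ x1 - Φ xb - B (x1 - xb)‖ := by rw [hRΦ1, hξ]
    _ ≤ ε * ‖x1 - xb‖ := h
    _ ≤ ε * r := by
        apply mul_le_mul_of_nonneg_left _ (le_of_lt hεpos)
        exact hξr
  have hd_small : ‖Φ x1 - Φ xb‖ ≤ CB * r := by
    have h1 : ‖B ξ‖ ≤ ‖B‖ * ‖ξ‖ := B.le_opNorm ξ
    have h2 : Φ x1 - Φ xb = B ξ + RΦ1 := by rw [hRΦ1]; abel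
    calc ‖Φ x1 - Φ xb‖ = ‖B ξ + RΦ1‖ := by rw [h2]
    _ ≤ ‖B ξ‖ + ‖RΦ1‖ := norm_add_le _ _
    _ ≤ ‖B‖ * ‖ξ‖ + ε * r := by linarith
    _ ≤ CB * r := by
        have h3 : ‖B‖ * ‖ξ‖ ≤ ‖B‖ * r := mul_le_mul_of_nonneg_left hξr (norm_nonneg _)
        have h4 : ε * r ≤ 1 * r := mul_le_mul_of_nonneg_right hε1 (le_of_lt hrpos)
        have h5 : ‖B‖ * r + 1 * r = CB * r := by rw [hCB]; ring
        linarith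
  have hd_r0 : ‖Φ x1 - Φ xb‖ ≤ r0 := le_trans hd_small hrr0
  obtain ⟨hv1zb, hswap1⟩ := hswap (Φ x1) v1 hv1sub hd_r0
  -- the corner point
  set qc : Ev n × Ev m := (xb, v1) with hqc
  set pc : Ev n × Ev m := (g qc, 0) with hpc
  have hqc_S : qc ∈ SKKT φ₀ Φ θ pc.1 pc.2 := by
    constructor
    · rfl
    · show v1 ∈ θ.subdiff (Φ xb + 0)
      rw [add_zero]
      exact hv1zb
  have hqcq0 : qc - q0 = ((0 : Ev n), u) := by
    rw [hqc, hq0def, Prod.mk_sub_mk, sub_self, hu]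
  have hqcq0n : ‖qc - q0‖ = ‖u‖ := by
    rw [hqcq0, Prod.norm_def]
    simp [norm_nonneg]
  have hqcδ₁ : dist qc q0 < δ₁ := by
    rw [dist_eq_norm, hqcq0n]
    have : c * (μ * r) ≥ 0 := by positivity
    linarith
  have hgqc : ‖g qc‖ ≤ CE * r := by
    have h1 := hg_eps qc q0 hqcδ₁ hq0δ₁
    rw [hgq0, sub_zero] at h1
    have h2 : ‖E (qc - q0)‖ ≤ ‖E‖ * ‖qc - q0‖ := E.le_opNorm _
    have h3 : ‖g qc‖ ≤ ‖g qc - E (qc - q0)‖ + ‖E (qc - q0)‖ := by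
      have := norm_add_le (g qc - E (qc - q0)) (E (qc - q0))
      simpa using this
    rw [hqcq0n] at h1 h2
    have h4 : ε * ‖u‖ ≤ 1 * r := by
      apply mul_le_mul hε1 hur (norm_nonneg _) zero_le_one
    have h5 : ‖E‖ * ‖u‖ ≤ ‖E‖ * r := mul_le_mul_of_nonneg_left hur (norm_nonneg _)
    have h6 : (‖E‖ + 1) * r = ‖E‖ * r + 1 * r := by ring
    rw [hCE]
    linarith
  -- the probe
  set w : Ev n × Ev m := (ξ, -u) with hw
  have hwn : ‖w‖ = r := by
    rw [hw, Prod.norm_def, hrmax]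
    simp [norm_neg]
  set pr : Ev n × Ev m := pc + μ • w with hpr
  have hpcn : ‖pc‖ = ‖g qc‖ := by
    rw [hpc, Prod.norm_def]
    simp [norm_nonneg]
  have hpcU : pc ∈ U := by
    apply hUb
    rw [Metric.mem_ball, dist_zero_right, hpcn]
    have hμr : μ * r > 0 := by positivity
    linarith
  have hprU : pr ∈ U := by
    apply hUb
    rw [Metric.mem_ball, dist_zero_right]
    have h1 : ‖pr‖ ≤ ‖pc‖ + ‖μ • w‖ := by rw [hpr]; exact norm_add_le _ _
    rw [norm_smul, Real.norm_eq_abs, abs_of_pos hμpos, hwn, hpcn] at h1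
    linarith
  have hqcV : qc ∈ V := by
    apply hVb
    rw [Metric.mem_ball, dist_eq_norm, hqcq0n]
    linarith
  obtain ⟨q', hq'S, hq'd⟩ := hA pc hpcU pr hprU qc ⟨hqc_S, hqcV⟩
  have hpcpr : ‖pc - pr‖ = μ * r := by
    have h1 : pc - pr = -(μ • w) := by rw [hpr]; abel
    rw [h1, norm_neg, norm_smul, Real.norm_eq_abs, abs_of_pos hμpos, hwn]
  rw [hpcpr] at hq'd
  set x' : Ev n := q'.1 with hx'
  set v' : Ev m := q'.2 with hv'
  set Δx : Ev n := x' - xb with hΔxd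
  set Δv : Ev m := v' - v1 with hΔvd
  have hqcq' : qc - q' = (xb - x', v1 - v') := by
    rw [hqc, hx', hv']
    rfl
  have hΔx : ‖Δx‖ ≤ c * (μ * r) := by
    have h1 : ‖(qc - q').1‖ ≤ ‖qc - q'‖ := norm_fst_le _
    rw [hqcq'] at h1
    simp only at h1
    rw [hΔxd, norm_sub_rev]
    calc ‖xb - x'‖ ≤ ‖qc - q'‖ := h1
    _ ≤ c * (μ * r) := hq'd
  have hΔv : ‖Δv‖ ≤ c * (μ * r) := by
    have h1 : ‖(qc - q').2‖ ≤ ‖qc - q'‖ := norm_snd_le _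
    rw [hqcq'] at h1
    simp only at h1
    rw [hΔvd, norm_sub_rev]
    calc ‖v1 - v'‖ ≤ ‖qc - q'‖ := h1
    _ ≤ c * (μ * r) := hq'd
  -- graph point
  set zp : Ev m := Φ x' + pr.2 with hzp
  have hvpsub : v' ∈ θ.subdiff zp := hq'S.2
  have hgq' : g q' = pr.1 := hq'S.1
  have hpr2 : pr.2 = -(μ • u) := by
    rw [hpr, hpc, hw]
    show (0 : Ev m) + (μ • w).2 = -(μ • u)
    rw [hw]
    show (0 : Ev m) + μ • (-u) = -(μ • u)
    rw [smul_neg, zero_add]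
  have hpr1 : pr.1 = g qc + μ • ξ := by
    rw [hpr, hpc, hw]
    rfl
  -- strict bound for g between q' and qc
  have hq'q0 : ‖q' - q0‖ ≤ c * (μ * r) + r := by
    have h1 : q' - q0 = -(qc - q') + (qc - q0) := by abel
    calc ‖q' - q0‖ = ‖-(qc - q') + (qc - q0)‖ := by rw [← h1]
    _ ≤ ‖-(qc - q')‖ + ‖qc - q0‖ := norm_add_le _ _
    _ = ‖qc - q'‖ + ‖u‖ := by rw [norm_neg, hqcq0n]
    _ ≤ c * (μ * r) + r := by linarith
  have hq'δ₁ : dist q' q0 < δ₁ := by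
    rw [dist_eq_norm]
    exact lt_of_le_of_lt hq'q0 hrδ₁
  set Rg : Ev n := g q' - g qc - E (q' - qc) with hRg
  have hq'qc : q' - qc = ((Δx, Δv) : Ev n × Ev m) := by
    rw [hΔxd, hΔvd, hqc, hx', hv']
    rfl
  have hRgb : ‖Rg‖ ≤ ε * (c * (μ * r)) := by
    have h := hg_eps q' qc hq'δ₁ hqcδ₁
    have h2 : ‖q' - qc‖ = ‖qc - q'‖ := norm_sub_rev _ _
    calc ‖Rg‖ ≤ ε * ‖q' - qc‖ := h
    _ ≤ ε * (c * (μ * r)) := by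
        rw [h2]
        exact mul_le_mul_of_nonneg_left hq'd (le_of_lt hεpos)
  -- strict bound for Φ between x' and xb
  have hx'δ₂ : dist x' xb < δ₂ := by
    rw [dist_eq_norm]
    have h0 : ‖x' - xb‖ ≤ c * (μ * r) := hΔx
    linarith
  set RΦ : Ev m := Φ x' - Φ xb - B Δx with hRΦ
  have hRΦb : ‖RΦ‖ ≤ ε * (c * (μ * r)) := by
    have h := hΦ_eps x' xb hx'δ₂ hxbδ₂
    calc ‖RΦ‖ = ‖Φ x' - Φ xb - B (x' - xb)‖ := by rw [hRΦ, hΔxd]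
    _ ≤ ε * ‖x' - xb‖ := h
    _ ≤ ε * (c * (μ * r)) := mul_le_mul_of_nonneg_left hΔx (le_of_lt hεpos)
  -- bound on ‖zp - Φ xb‖
  have hzpb : ‖zp - Φ xb‖ ≤ CB * (c * (μ * r)) + μ * r := by
    have h1 : zp - Φ xb = (Φ x' - Φ xb) + pr.2 := by rw [hzp]; abel
    have h2 : ‖Φ x' - Φ xb‖ ≤ CB * (c * (μ * r)) := by
      have h3 : Φ x' - Φ xb = B Δx + RΦ := by rw [hRΦ]; abel
      have h4 : ‖B Δx‖ ≤ ‖B‖ * ‖Δx‖ := B.le_opNorm _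
      have h5 : ‖B‖ * ‖Δx‖ ≤ ‖B‖ * (c * (μ * r)) :=
        mul_le_mul_of_nonneg_left hΔx (norm_nonneg _)
      have h6 : ε * (c * (μ * r)) ≤ 1 * (c * (μ * r)) := by
        apply mul_le_mul_of_nonneg_right hε1
        positivity
      calc ‖Φ x' - Φ xb‖ = ‖B Δx + RΦ‖ := by rw [h3]
      _ ≤ ‖B Δx‖ + ‖RΦ‖ := norm_add_le _ _
      _ ≤ ‖B‖ * (c * (μ * r)) + 1 * (c * (μ * r)) := by linarith
      _ = CB * (c * (μ * r)) := by rw [hCB]; ring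
    have h7 : ‖pr.2‖ = μ * ‖u‖ := by
      rw [hpr2, norm_neg, norm_smul, Real.norm_eq_abs, abs_of_pos hμpos]
    calc ‖zp - Φ xb‖ = ‖(Φ x' - Φ xb) + pr.2‖ := by rw [h1]
    _ ≤ ‖Φ x' - Φ xb‖ + ‖pr.2‖ := norm_add_le _ _
    _ ≤ CB * (c * (μ * r)) + μ * r := by
        rw [h7]
        have : μ * ‖u‖ ≤ μ * r := mul_le_mul_of_nonneg_left hur (le_of_lt hμpos)
        linarith
  -- KEY IDENTITIES
  have key1 : ⟪ξ, g q' - g qc⟫ = μ * ‖ξ‖ ^ 2 := by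
    rw [hgq', hpr1]
    have h1 : g qc + μ • ξ - g qc = μ • ξ := by abel
    rw [h1, real_inner_smul_right, real_inner_self_eq_norm_sq]
  have key2 : -⟪u, pr.2⟫ = μ * ‖u‖ ^ 2 := by
    rw [hpr2, inner_neg_right, real_inner_smul_right, real_inner_self_eq_norm_sq, neg_neg]
  -- decomposition identities
  have t1 : ⟪ξ, g q' - g qc⟫ = ⟪E ((ξ, (0:Ev m)) : Ev n × Ev m), Δx⟫ + ⟪B ξ, Δv⟫ + ⟪ξ, Rg⟫ := by
    have e1 : g q' - g qc = E (q' - qc) + Rg := by rw [hRg]; abel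
    rw [e1, inner_add_right, hq'qc]
    have e2 : ((Δx, Δv) : Ev n × Ev m) = ((Δx, (0:Ev m)) : Ev n × Ev m) + (((0:Ev n), Δv) : Ev n × Ev m) := by
      rw [Prod.mk_add_mk, add_zero, zero_add]
    rw [e2, map_add, inner_add_right]
    have e3 : ⟪ξ, E ((Δx, (0:Ev m)) : Ev n × Ev m)⟫ = ⟪E ((ξ, (0:Ev m)) : Ev n × Ev m), Δx⟫ := by
      rw [real_inner_comm]
      exact hsym Δx ξ
    have e4 : ⟪ξ, E (((0:Ev n), Δv) : Ev n × Ev m)⟫ = ⟪B ξ, Δv⟫ := by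
      rw [hE0 Δv]
      rw [adjD, ← hBdef]
      exact ContinuousLinearMap.adjoint_inner_right B ξ Δv
    rw [e3, e4]
  have t2 : -⟪u, pr.2⟫ = -⟪u, zp - Φ xb⟫ + ⟪E (((0:Ev n), u) : Ev n × Ev m), Δx⟫ + ⟪u, RΦ⟫ := by
    have e1 : pr.2 = (zp - Φ xb) - (Φ x' - Φ xb) := by rw [hzp]; abel
    rw [e1, inner_sub_right]
    have e2 : Φ x' - Φ xb = B Δx + RΦ := by rw [hRΦ]; abel
    rw [e2, inner_add_right]
    have e3 : ⟪u, B Δx⟫ = ⟪E (((0:Ev n), u) : Ev n × Ev m), Δx⟫ := by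
      rw [hE0 u, adjD, ← hBdef]
      exact (ContinuousLinearMap.adjoint_inner_left B Δx u).symm
    rw [e3]
    ring
  have t3 : ⟪E ((ξ, (0:Ev m)) : Ev n × Ev m), Δx⟫ + ⟪E (((0:Ev n), u) : Ev n × Ev m), Δx⟫
      = ⟪E ((ξ, u) : Ev n × Ev m), Δx⟫ := by
    rw [← inner_add_left, ← map_add]
    congr 2
    rw [Prod.mk_add_mk, add_zero, zero_add]
  have t4 : ⟪B ξ, Δv⟫ = ⟪v' - v1, Φ x1 - Φ xb⟫ - ⟪RΦ1, Δv⟫ := by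
    have e1 : B ξ = (Φ x1 - Φ xb) - RΦ1 := by rw [hRΦ1]; abel
    rw [e1, inner_sub_left]
    have e2 : ⟪Φ x1 - Φ xb, Δv⟫ = ⟪v' - v1, Φ x1 - Φ xb⟫ := by
      rw [real_inner_comm, hΔvd]
    rw [e2]
  -- the swap inequality
  have hsw := hswap1 zp v' hvpsub
  -- bounds on the individual inner products
  have b1 : ⟪E ((ξ, u) : Ev n × Ev m), Δx⟫ ≤ (ε * r) * (c * (μ * r)) := by
    calc ⟪E ((ξ, u) : Ev n × Ev m), Δx⟫ ≤ ‖E ((ξ, u) : Ev n × Ev m)‖ * ‖Δx‖ :=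
      real_inner_le_norm _ _
    _ ≤ (ε * r) * (c * (μ * r)) := by
        apply mul_le_mul hEkkt hΔx (norm_nonneg _)
        positivity
  have b3 : ⟪v' - v1, zp - Φ xb⟫ ≤ (c * (μ * r)) * (CB * (c * (μ * r)) + μ * r) := by
    calc ⟪v' - v1, zp - Φ xb⟫ ≤ ‖v' - v1‖ * ‖zp - Φ xb‖ := real_inner_le_norm _ _
    _ ≤ (c * (μ * r)) * (CB * (c * (μ * r)) + μ * r) := by
        apply mul_le_mul _ hzpb (norm_nonneg _) (by positivity)
        rw [← hΔvd]
        exact hΔv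
  have b4 : -⟪RΦ1, Δv⟫ ≤ (ε * r) * (c * (μ * r)) := by
    have h1 : |⟪RΦ1, Δv⟫| ≤ ‖RΦ1‖ * ‖Δv‖ := abs_real_inner_le_norm _ _
    have h2 : ‖RΦ1‖ * ‖Δv‖ ≤ (ε * r) * (c * (μ * r)) := by
      apply mul_le_mul hRΦ1b hΔv (norm_nonneg _)
      positivity
    have h3 := neg_abs_le ⟪RΦ1, Δv⟫
    linarith
  have b5 : ⟪ξ, Rg⟫ ≤ r * (ε * (c * (μ * r))) := by
    calc ⟪ξ, Rg⟫ ≤ ‖ξ‖ * ‖Rg‖ := real_inner_le_norm _ _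
    _ ≤ r * (ε * (c * (μ * r))) := by
        apply mul_le_mul hξr hRgb (norm_nonneg _)
        linarith
  have b6 : ⟪u, RΦ⟫ ≤ r * (ε * (c * (μ * r))) := by
    calc ⟪u, RΦ⟫ ≤ ‖u‖ * ‖RΦ‖ := real_inner_le_norm _ _
    _ ≤ r * (ε * (c * (μ * r))) := by
        apply mul_le_mul hur hRΦb (norm_nonneg _)
        linarith
  -- r² ≤ ‖ξ‖² + ‖u‖²
  have hr2 : r ^ 2 ≤ ‖ξ‖ ^ 2 + ‖u‖ ^ 2 := by
    rcases le_total ‖ξ‖ ‖u‖ with h | h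
    · have he : r = ‖u‖ := by rw [hrmax, max_eq_right h]
      rw [he]
      linarith [sq_nonneg ‖ξ‖]
    · have he : r = ‖ξ‖ := by rw [hrmax, max_eq_left h]
      rw [he]
      linarith [sq_nonneg ‖u‖]
  -- assemble
  have hsum : μ * r ^ 2 ≤ 4 * ((ε * r) * (c * (μ * r)))
      + 2 * ((c * (μ * r)) * (CB * (c * (μ * r)) + μ * r)) := by
    have hD : μ * ‖ξ‖ ^ 2 + μ * ‖u‖ ^ 2 = ⟪ξ, g q' - g qc⟫ + -⟪u, pr.2⟫ := by
      rw [key1, key2]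
    have hμr2 : μ * r ^ 2 ≤ μ * ‖ξ‖ ^ 2 + μ * ‖u‖ ^ 2 := by
      calc μ * r ^ 2 ≤ μ * (‖ξ‖ ^ 2 + ‖u‖ ^ 2) := mul_le_mul_of_nonneg_left hr2 hμpos.le
      _ = μ * ‖ξ‖ ^ 2 + μ * ‖u‖ ^ 2 := by ring
    -- hsw : ⟪v' - v1, Φ x1 - Φ xb⟫ - ⟪v1 - vb, zp - Φ xb⟫ ≤ 2 * ⟪v' - v1, zp - Φ xb⟫
    have hueq : -⟪u, zp - Φ xb⟫ = -⟪v1 - vb, zp - Φ xb⟫ := by rw [hu]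
    linarith [hsw, t1, t2, t3, t4, b1, b3, b4, b5, b6, hD, hμr2, hueq]
  -- final numeric contradiction
  have hfinal : 4 * ((ε * r) * (c * (μ * r)))
      + 2 * ((c * (μ * r)) * (CB * (c * (μ * r)) + μ * r)) < μ * r ^ 2 := by
    have hexp : 4 * ((ε * r) * (c * (μ * r)))
        + 2 * ((c * (μ * r)) * (CB * (c * (μ * r)) + μ * r))
        = (4 * ε * c + 2 * c * (CB * c + 1) * μ) * (μ * r ^ 2) := by ring
    have haux1 : 4 * ε * c ≤ 1 / 4 := by
      have h16 : (0:ℝ) < 16 * (c + 1) := by linarith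
      rw [hεdef, mul_one_div, div_mul_eq_mul_div,
        div_le_div_iff₀ h16 (by norm_num : (0:ℝ) < 4)]
      linarith
    have haux2 : 2 * c * (CB * c + 1) * μ ≤ 1 / 4 := by
      rw [hμdef]
      rw [mul_one_div, div_le_div_iff₀ (by positivity) (by norm_num)]
      have e : 8 * (c + 1) * (CB * c + 1) * 1 - 2 * c * (CB * c + 1) * 4
          = 8 * (CB * c + 1) := by ring
      linarith [hCBc1]
    have hpos : 0 < μ * r ^ 2 := by positivity
    rw [hexp]
    have hsum2 : 4 * ε * c + 2 * c * (CB * c + 1) * μ ≤ 1 / 2 := by linarith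
    calc (4 * ε * c + 2 * c * (CB * c + 1) * μ) * (μ * r ^ 2)
        ≤ (1 / 2) * (μ * r ^ 2) := mul_le_mul_of_nonneg_right hsum2 hpos.le
    _ < μ * r ^ 2 := by linarith
  linarith

end CoreTheorem
/-- the Lipschitz-like property of the KKT solution map implies its robust
isolated calmness. -/
theorem stmt19 {n m : ℕ} (θ : CPWL m) (φ₀ : Ev n → ℝ) (Φ : Ev n → Ev m)
    (xb : Ev n) (vb : Ev m)
    (hphi : ContDiffAt ℝ 2 φ₀ xb) (hPhi : ContDiffAt ℝ 2 Φ xb)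
    (hvb : vb ∈ LamCom φ₀ Φ θ xb)
    (hll : LipschitzLike (fun p => SKKT φ₀ Φ θ p.1 p.2) (xb, vb)) :
    RobustIsolCalm (fun p => SKKT φ₀ Φ θ p.1 p.2) (xb, vb) := by
  classical
  obtain ⟨ρ, hρ, hiso⟩ := skkt_isolated θ φ₀ Φ xb vb hphi hPhi hvb hll
  obtain ⟨c, hc, U, hU, V, hV, hA⟩ := hll
  obtain ⟨δU, hδU, hUb⟩ := Metric.mem_nhds_iff.mp hU
  obtain ⟨εV, hεV, hVb⟩ := Metric.mem_nhds_iff.mp hV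
  set q0 : Ev n × Ev m := (xb, vb) with hq0def
  have hq0S : q0 ∈ SKKT φ₀ Φ θ 0 0 := by
    constructor
    · exact hvb.1
    · show vb ∈ θ.subdiff (Φ xb + 0)
      rw [add_zero]
      exact hvb.2
  set ε' : ℝ := min (ρ / 2) εV with hε'def
  have hε'pos : 0 < ε' := lt_min (by linarith) hεV
  have hε'ρ : ε' ≤ ρ / 2 := min_le_left _ _
  have hε'V : ε' ≤ εV := min_le_right _ _
  set δ : ℝ := min δU (ε' / (2 * (c + 1))) with hδdef
  have hδpos : 0 < δ := lt_min hδU (by positivity)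
  have hδU' : δ ≤ δU := min_le_left _ _
  have hδε : δ ≤ ε' / (2 * (c + 1)) := min_le_right _ _
  have hcδ : c * δ ≤ ε' / 2 := by
    have h1 : c * δ ≤ c * (ε' / (2 * (c + 1))) :=
      mul_le_mul_of_nonneg_left hδε hc
    have h2 : c * (ε' / (2 * (c + 1))) ≤ ε' / 2 := by
      rw [show c * (ε' / (2 * (c + 1))) = (c * ε') / (2 * (c + 1)) from by ring,
        div_le_div_iff₀ (by positivity) (by norm_num : (0:ℝ) < 2)]
      have e : ε' * (2 * (c + 1)) - c * ε' * 2 = 2 * ε' := by ring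
      linarith
    linarith
  refine ⟨c, hc, Metric.ball 0 δ, Metric.ball_mem_nhds _ hδpos,
    Metric.ball q0 ε', Metric.ball_mem_nhds _ hε'pos, ?_, ?_⟩
  · -- the isolated calmness estimate
    intro p hp q hq
    have hpU : p ∈ U := hUb (by
      rw [Metric.mem_ball] at hp ⊢
      exact lt_of_lt_of_le hp hδU')
    have h0U : (0 : Ev n × Ev m) ∈ U := hUb (Metric.mem_ball_self hδU)
    have hqV : q ∈ V := hVb (by
      have hb := hq.2
      rw [Metric.mem_ball] at hb ⊢
      exact lt_of_lt_of_le hb hε'V)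
    obtain ⟨q', hq'S, hq'd⟩ := hA p hpU 0 h0U q ⟨hq.1, hqV⟩
    rw [sub_zero] at hq'd
    have h2 : ‖p‖ < δ := by
      rw [Metric.mem_ball, dist_zero_right] at hp; exact hp
    have h3 : c * ‖p‖ ≤ c * δ := mul_le_mul_of_nonneg_left h2.le hc
    have h4 : ‖q - q0‖ < ε' := by
      have hb := hq.2
      rw [Metric.mem_ball, dist_eq_norm] at hb
      exact hb
    have hq'q0 : ‖q' - q0‖ < ρ := by
      have h1 : ‖q' - q0‖ ≤ ‖q - q'‖ + ‖q - q0‖ := by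
        have e : q' - q0 = -(q - q') + (q - q0) := by abel
        calc ‖q' - q0‖ = ‖-(q - q') + (q - q0)‖ := by rw [← e]
        _ ≤ ‖-(q - q')‖ + ‖q - q0‖ := norm_add_le _ _
        _ = ‖q - q'‖ + ‖q - q0‖ := by rw [norm_neg]
      linarith
    have hq'eq : q' = q0 := hiso q' hq'S hq'q0
    rw [hq'eq] at hq'd
    have h5 : ‖p‖ ≤ ‖p.1‖ + ‖p.2‖ := by
      rw [Prod.norm_def]
      exact max_le (by linarith [norm_nonneg p.2]) (by linarith [norm_nonneg p.1])
    calc ‖q - q0‖ ≤ c * ‖p‖ := hq'd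
    _ ≤ c * (‖p.1‖ + ‖p.2‖) := mul_le_mul_of_nonneg_left h5 hc
  · -- nonemptiness
    intro p hp
    have hpU : p ∈ U := hUb (by
      rw [Metric.mem_ball] at hp ⊢
      exact lt_of_lt_of_le hp hδU')
    have h0U : (0 : Ev n × Ev m) ∈ U := hUb (Metric.mem_ball_self hδU)
    have hq0V : q0 ∈ V := mem_of_mem_nhds hV
    obtain ⟨q', hq'S, hq'd⟩ := hA 0 h0U p hpU q0 ⟨hq0S, hq0V⟩
    rw [zero_sub, norm_neg] at hq'd
    refine ⟨q', hq'S, ?_⟩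
    rw [Metric.mem_ball, dist_eq_norm]
    have h2 : ‖p‖ < δ := by
      rw [Metric.mem_ball, dist_zero_right] at hp; exact hp
    have h3 : c * ‖p‖ ≤ c * δ := mul_le_mul_of_nonneg_left h2.le hc
    have h4 : ‖q' - q0‖ = ‖q0 - q'‖ := norm_sub_rev _ _
    linarith
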